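/- Let p be a prime and n ≥ 1. For a representation ρ : G → U_{n+1}(F_p) of a group G into the group of upper-triangular unipotent (n+1)×(n+1) matrices over F_p, ρ is trivial on the (n+1)-st term G_{(n+1)} of the p-Zassenhaus filtration of G. Equivalently, the group U_{n+1}(F_p) satisfies U_{n+1}(F_p)_{(n+1)} = 1. -/

import Mathlib

open Subgroup

/-- The `p`-Zassenhaus filtration of a group `G`:
`G_(1) = G` and `G_(n) = (G_(⌈n/p⌉))^p ∏_{i+j=n} [G_(i), G_(j)]`
(for `p ≥ 2` and `n ≥ 2`, the number `min (n-1) ((n+p-1)/p)` equals `⌈n/p⌉`). -/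
def zassenhaus (p : ℕ) (G : Type*) [Group G] : ℕ → Subgroup G
  | 0 => ⊤
  | 1 => ⊤
  | (n + 2) =>
      Subgroup.closure
        ((fun x => x ^ p) '' (zassenhaus p G (min (n + 1) ((n + 2 + p - 1) / p)) : Set G))
      ⊔ ⨆ i : Fin (n + 1), ⁅zassenhaus p G (i.1 + 1), zassenhaus p G (n + 1 - i.1)⁆
termination_by n => n
decreasing_by
  · omega
  · have := i.isLt; omega
  · have := i.isLt; omega

/-- The group `U_m(𝔽_p)` of upper-triangular unipotent `m × m` matrices over `𝔽_p`,
as a subgroup of the units of the matrix ring. -/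
def Unip (p m : ℕ) [NeZero p] : Subgroup (Matrix (Fin m) (Fin m) (ZMod p))ˣ where
  carrier := {g | (∀ i, g.val i i = 1) ∧ ∀ i j : Fin m, j < i → g.val i j = 0}
  one_mem' := by
    refine ⟨fun i => ?_, fun i j h => ?_⟩
    · simp
    · simp [Matrix.one_apply, (Fin.ne_of_lt h).symm]
  mul_mem' := by
    rintro a b ⟨ha1, ha0⟩ ⟨hb1, hb0⟩
    constructor
    · intro i
      rw [Units.val_mul, Matrix.mul_apply]
      rw [Finset.sum_eq_single i]
      · rw [ha1, hb1, one_mul]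
      · intro k _ hk
        rcases Ne.lt_or_gt hk with h | h
        · rw [ha0 i k h, zero_mul]
        · rw [hb0 k i h, mul_zero]
      · intro h; exact absurd (Finset.mem_univ i) h
    · intro i j hj
      rw [Units.val_mul, Matrix.mul_apply]
      apply Finset.sum_eq_zero
      intro k _
      rcases lt_or_ge k i with h | h
      · rw [ha0 i k h, zero_mul]
      · rw [hb0 k j (lt_of_lt_of_le hj h), mul_zero]
  inv_mem' := by
    intro a ha
    have key : ∀ m : ℕ, (∀ i, (a ^ m).val i i = 1) ∧
        ∀ i j, j < i → (a ^ m).val i j = 0 := by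
      intro m
      induction m with
      | zero =>
        refine ⟨fun i => ?_, fun i j h => ?_⟩
        · simp
        · simp [Matrix.one_apply, (Fin.ne_of_lt h).symm]
      | succ k ih =>
        obtain ⟨ha1, ha0⟩ := ha
        obtain ⟨ih1, ih0⟩ := ih
        rw [pow_succ]
        constructor
        · intro i
          rw [Units.val_mul, Matrix.mul_apply, Finset.sum_eq_single i]
          · rw [ih1, ha1, one_mul]
          · intro l _ hl
            rcases Ne.lt_or_gt hl with h | h
            · rw [ih0 i l h, zero_mul]
            · rw [ha0 l i h, mul_zero]
          · intro h; exact absurd (Finset.mem_univ i) h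
        · intro i j hj
          rw [Units.val_mul, Matrix.mul_apply]
          apply Finset.sum_eq_zero
          intro l _
          rcases lt_or_ge l i with h | h
          · rw [ih0 i l h, zero_mul]
          · rw [ha0 l j (lt_of_lt_of_le hj h), mul_zero]
    have hord : a ^ orderOf a = 1 := pow_orderOf_eq_one a
    have hpos : 0 < orderOf a := orderOf_pos a
    have hinv : a⁻¹ = a ^ (orderOf a - 1) := by
      refine inv_eq_of_mul_eq_one_right ?_
      rw [← pow_succ', Nat.sub_add_cancel hpos, hord]
    rw [hinv]
    exact key _

open scoped commutatorElement

section Aux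

variable {p m : ℕ}

/-- `A` is strictly upper triangular of depth `k`. -/
def SDm (k : ℕ) (A : Matrix (Fin m) (Fin m) (ZMod p)) : Prop :=
  ∀ i j : Fin m, (j : ℕ) < (i : ℕ) + k → A i j = 0

lemma SDm.mono {a b : ℕ} {A : Matrix (Fin m) (Fin m) (ZMod p)}
    (h : SDm a A) (hba : b ≤ a) : SDm b A :=
  fun i j hij => h i j (by omega)

lemma SDm.add {a : ℕ} {A B : Matrix (Fin m) (Fin m) (ZMod p)}
    (hA : SDm a A) (hB : SDm a B) : SDm a (A + B) := fun i j h => by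
  rw [Matrix.add_apply, hA i j h, hB i j h, add_zero]

lemma SDm.sub {a : ℕ} {A B : Matrix (Fin m) (Fin m) (ZMod p)}
    (hA : SDm a A) (hB : SDm a B) : SDm a (A - B) := fun i j h => by
  rw [Matrix.sub_apply, hA i j h, hB i j h, sub_zero]

lemma SDm.mul {a b : ℕ} {A B : Matrix (Fin m) (Fin m) (ZMod p)}
    (hA : SDm a A) (hB : SDm b B) : SDm (a + b) (A * B) := fun i j h => by
  rw [Matrix.mul_apply]
  apply Finset.sum_eq_zero
  intro k _
  by_cases hk : (k : ℕ) < (i : ℕ) + a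
  · rw [hA i k hk, zero_mul]
  · rw [hB k j (by omega), mul_zero]

lemma SDm.one : SDm 0 (1 : Matrix (Fin m) (Fin m) (ZMod p)) := fun i j h =>
  Matrix.one_apply_ne (fun e => by omega)

lemma SDm.pow {a : ℕ} {A : Matrix (Fin m) (Fin m) (ZMod p)} (hA : SDm a A) :
    ∀ k : ℕ, SDm ((k + 1) * a) (A ^ (k + 1)) := by
  intro k
  induction k with
  | zero => simpa using hA
  | succ l ih =>
    have := ih.mul hA
    rw [← pow_succ] at this
    exact this.mono (by ring_nf; omega)

lemma SDm.unit_mul {k : ℕ} {X Y : Matrix (Fin m) (Fin m) (ZMod p)}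
    (hX : SDm k (X - 1)) (hY : SDm k (Y - 1)) : SDm k (X * Y - 1) := by
  have e : X * Y - 1 = (X - 1) * (Y - 1) + ((X - 1) + (Y - 1)) := by noncomm_ring
  rw [e]
  exact ((hX.mul hY).mono (by omega)).add (hX.add hY)

variable [NeZero p]

/-- The depth-`k` congruence subgroup of unipotent matrices. -/
def Ug (p m : ℕ) [NeZero p] (k : ℕ) : Subgroup (Matrix (Fin m) (Fin m) (ZMod p))ˣ where
  carrier := {g | SDm k ((g : Matrix (Fin m) (Fin m) (ZMod p)) - 1)}
  one_mem' := by
    intro i j h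
    simp
  mul_mem' := by
    intro a b ha hb
    exact SDm.unit_mul ha hb
  inv_mem' := by
    intro a ha
    have key : ∀ n : ℕ, SDm k (((a ^ n : _ˣ) : Matrix (Fin m) (Fin m) (ZMod p)) - 1) := by
      intro n
      induction n with
      | zero => intro i j h; simp
      | succ l ih =>
        rw [pow_succ, Units.val_mul]
        exact SDm.unit_mul ih ha
    have hord : a ^ orderOf a = 1 := pow_orderOf_eq_one a
    have hpos : 0 < orderOf a := orderOf_pos a
    have hinv : a⁻¹ = a ^ (orderOf a - 1) := by
      refine inv_eq_of_mul_eq_one_right ?_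
      rw [← pow_succ', Nat.sub_add_cancel hpos, hord]
    show SDm k _
    rw [hinv]
    exact key _

lemma mem_Ug {g : (Matrix (Fin m) (Fin m) (ZMod p))ˣ} {k : ℕ} :
    g ∈ Ug p m k ↔ SDm k ((g : Matrix (Fin m) (Fin m) (ZMod p)) - 1) := Iff.rfl

lemma Ug_mono {a b : ℕ} (h : b ≤ a) : Ug p m a ≤ Ug p m b :=
  fun _ hg => SDm.mono hg h

lemma sd_val {g : (Matrix (Fin m) (Fin m) (ZMod p))ˣ} {k : ℕ} (hg : g ∈ Ug p m k) :
    SDm 0 ((g : Matrix (Fin m) (Fin m) (ZMod p))) := by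
  have e : (g : Matrix (Fin m) (Fin m) (ZMod p)) =
      ((g : Matrix (Fin m) (Fin m) (ZMod p)) - 1) + 1 := by abel
  rw [e]
  exact (SDm.mono hg (Nat.zero_le _)).add SDm.one

lemma comm_mem_Ug {a b : (Matrix (Fin m) (Fin m) (ZMod p))ˣ} {i j : ℕ}
    (ha : a ∈ Ug p m i) (hb : b ∈ Ug p m j) : ⁅a, b⁆ ∈ Ug p m (i + j) := by
  set A : Matrix (Fin m) (Fin m) (ZMod p) := ↑a with hA
  set B : Matrix (Fin m) (Fin m) (ZMod p) := ↑b with hB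
  set A' : Matrix (Fin m) (Fin m) (ZMod p) := ↑a⁻¹ with hA'
  set B' : Matrix (Fin m) (Fin m) (ZMod p) := ↑b⁻¹ with hB'
  have hAA : A * A' = 1 := by rw [hA, hA', ← Units.val_mul, mul_inv_cancel, Units.val_one]
  have hBB : B * B' = 1 := by rw [hB, hB', ← Units.val_mul, mul_inv_cancel, Units.val_one]
  have h2 : B * A * A' * B' = 1 := by rw [mul_assoc B A A', hAA, mul_one, hBB]
  have expand : ((A - 1) * (B - 1) - (B - 1) * (A - 1)) * (A' * B')
      = A * B * A' * B' - B * A * A' * B' := by noncomm_ring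
  rw [h2] at expand
  have key : ((⁅a, b⁆ : (Matrix (Fin m) (Fin m) (ZMod p))ˣ) : Matrix (Fin m) (Fin m) (ZMod p)) - 1
      = ((A - 1) * (B - 1) - (B - 1) * (A - 1)) * (A' * B') := by
    rw [expand]
    show ((a * b * a⁻¹ * b⁻¹ : _ˣ) : Matrix (Fin m) (Fin m) (ZMod p)) - 1 = _
    rw [Units.val_mul, Units.val_mul, Units.val_mul]
  rw [mem_Ug, key]
  have ha' : SDm i (A - 1) := ha
  have hb' : SDm j (B - 1) := hb
  have h3 := ((ha'.mul hb').sub ((hb'.mul ha').mono (by omega))).mul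
      ((sd_val ((Ug p m i).inv_mem ha)).mul (sd_val ((Ug p m j).inv_mem hb)))
  exact h3.mono (by omega)

lemma pow_mem_Ug [NeZero m] (hp : p.Prime) {a : (Matrix (Fin m) (Fin m) (ZMod p))ˣ} {k : ℕ}
    (ha : a ∈ Ug p m k) : a ^ p ∈ Ug p m (p * k) := by
  haveI : Fact p.Prime := ⟨hp⟩
  set N : Matrix (Fin m) (Fin m) (ZMod p) := ↑a - 1 with hN
  have hNsd : SDm k N := ha
  rw [mem_Ug]
  have hv : ((a ^ p : _ˣ) : Matrix (Fin m) (Fin m) (ZMod p)) = (N + 1) ^ p := by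
    rw [Units.val_pow_eq_pow_val]
    congr 1
    rw [hN]; abel
  rw [hv, add_pow_char_of_commute _ (Commute.one_right N), one_pow, add_sub_cancel_right]
  obtain ⟨q, hq⟩ : ∃ q, p = q + 1 := ⟨p - 1, by have := hp.two_le; omega⟩
  have h5 := hNsd.pow q
  rw [← hq] at h5
  exact h5

lemma mem_Ug_full [NeZero m] {g : (Matrix (Fin m) (Fin m) (ZMod p))ˣ}
    (hg : g ∈ Ug p m m) : g = 1 := by
  have : (g : Matrix (Fin m) (Fin m) (ZMod p)) - 1 = 0 := by
    ext i j
    rw [Matrix.zero_apply]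
    exact hg i j (by have := j.isLt; omega)
  have hval : (g : Matrix (Fin m) (Fin m) (ZMod p)) = 1 := by
    rw [sub_eq_zero] at this; exact this
  exact Units.ext hval

end Aux

lemma Unip_le_Ug_one {p m : ℕ} [NeZero p] : Unip p m ≤ Ug p m 1 := by
  rintro g ⟨h1, h0⟩
  intro i j hij
  rw [Matrix.sub_apply]
  rcases eq_or_lt_of_le (Nat.lt_succ_iff.mp hij) with h | h
  · have hji : j = i := Fin.ext h
    subst hji
    rw [h1, Matrix.one_apply_eq, sub_self]
  · rw [h0 i j h, Matrix.one_apply_ne (fun e => by omega), sub_zero]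

lemma zass_le_Ug {p : ℕ} [NeZero p] (hp : p.Prime) {m : ℕ} [NeZero m] {G : Type} [Group G]
    (f : G →* (Matrix (Fin m) (Fin m) (ZMod p))ˣ)
    (hf : ∀ g, f g ∈ Ug p m 1) :
    ∀ k, ∀ g ∈ zassenhaus p G k, f g ∈ Ug p m k := by
  intro k
  induction k using Nat.strong_induction_on with
  | _ k ih =>
    match k with
    | 0 => exact fun g _ => SDm.mono (hf g) (Nat.zero_le _)
    | 1 => exact fun g _ => hf g
    | (n + 2) =>
      intro g hg
      have hp2 : 2 ≤ p := hp.two_le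
      set d : ℕ := (n + 2 + p - 1) / p with hd
      set m' : ℕ := min (n + 1) d with hm'
      have hdm : p * d + (n + 2 + p - 1) % p = n + 2 + p - 1 := Nat.div_add_mod _ _
      have hmod : (n + 2 + p - 1) % p < p := Nat.mod_lt _ (by omega)
      have hn2 : n + 2 + p - 1 = n + 1 + p := by omega
      rw [hn2] at hdm hmod
      have hpd : n + 2 ≤ p * d := by nlinarith [hdm, hmod]
      have hpm' : n + 2 ≤ p * m' := by
        rcases le_total (n + 1) d with h | h
        · rw [hm', min_eq_left h]
          calc n + 2 ≤ 2 * (n + 1) := by omega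
          _ ≤ p * (n + 1) := Nat.mul_le_mul_right _ hp2
        · rw [hm', min_eq_right h]; exact hpd
      have hm'1 : 1 ≤ m' := by
        have hd1 : 1 ≤ d := (Nat.one_le_div_iff (by omega)).mpr (by omega)
        omega
      have hle : zassenhaus p G (n + 2) ≤ (Ug p m (n + 2)).comap f := by
        rw [zassenhaus]
        apply sup_le
        · rw [Subgroup.closure_le]
          rintro x ⟨y, hy, rfl⟩
          have hyU : f y ∈ Ug p m m' := ih m' (by omega) y hy
          have := pow_mem_Ug hp hyU
          simp only [Set.mem_setOf_eq, SetLike.mem_coe, Subgroup.mem_comap]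
          rw [map_pow]
          exact Ug_mono hpm' this
        · apply iSup_le
          intro i
          rw [Subgroup.commutator_le]
          intro g1 h1 g2 h2
          have hi := i.isLt
          have c1 : f g1 ∈ Ug p m (i.1 + 1) := ih (i.1 + 1) (by omega) g1 h1
          have c2 : f g2 ∈ Ug p m (n + 1 - i.1) := ih (n + 1 - i.1) (by omega) g2 h2
          rw [Subgroup.mem_comap, map_commutatorElement]
          have := comm_mem_Ug c1 c2
          have heq : i.1 + 1 + (n + 1 - i.1) = n + 2 := by omega
          rwa [heq] at this
      exact hle hg

theorem stmt_6 (p n : ℕ) (hp : p.Prime) (hn : 1 ≤ n) :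
    (∀ (G : Type) [Group G] (ρ : G →* ↥(@Unip p (n + 1) ⟨hp.ne_zero⟩)),
        ∀ g ∈ zassenhaus p G (n + 1), ρ g = 1) ∧
    zassenhaus p (↥(@Unip p (n + 1) ⟨hp.ne_zero⟩)) (n + 1) = ⊥ := by
  haveI : NeZero p := ⟨hp.ne_zero⟩
  have main : ∀ (G : Type) [Group G] (ρ : G →* ↥(@Unip p (n + 1) ⟨hp.ne_zero⟩)),
      ∀ g ∈ zassenhaus p G (n + 1), ρ g = 1 := by
    intro G _ ρ g hg
    set f : G →* (Matrix (Fin (n + 1)) (Fin (n + 1)) (ZMod p))ˣ :=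
      (Unip p (n + 1)).subtype.comp ρ with hf
    have hfU : ∀ g, f g ∈ Ug p (n + 1) 1 := fun g => Unip_le_Ug_one (ρ g).2
    have := zass_le_Ug hp f hfU (n + 1) g hg
    have hone : f g = 1 := mem_Ug_full this
    exact OneMemClass.coe_eq_one.mp hone
  refine ⟨main, ?_⟩
  rw [eq_bot_iff]
  intro g hg
  rw [Subgroup.mem_bot]
  exact main _ (MonoidHom.id _) g hg
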